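/- Let m > d − 1 ≥ 1 and τ₁ > 0, R > 0. Then for all sufficiently small ε > 0, the remainder integral ∫_{ε^{1/(12m)} < |x'| < R} ε / (τ₁|x'|^m (ε + τ₁|x'|^m)) dx' over the (d−1)-dimensional annulus is bounded by C ε^{(10m + d − 1)/(12m)} for some constant C independent of ε, provided m > (d−1)/2. -/

import Mathlib

open MeasureTheory Set Real

/-- Bound on the remainder integral over the annulus {ε^{1/(12m)} < |x'| < R} ⊂ ℝ^{d−1}. -/
theorem stmt7 (d : ℕ) (hd : 2 ≤ d) (m τ₁ R : ℝ)
    (hm2 : ((d : ℝ) - 1) / 2 < m) (hmd : (d : ℝ) - 1 < m) (hτ : 0 < τ₁) (hR : 0 < R) :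
    ∃ C ε₀ : ℝ, 0 < C ∧ 0 < ε₀ ∧ ∀ ε : ℝ, 0 < ε → ε < ε₀ →
      (∫ x in {x : EuclideanSpace ℝ (Fin (d - 1)) |
          ε ^ (1 / (12 * m)) < ‖x‖ ∧ ‖x‖ < R},
        ε / (τ₁ * ‖x‖ ^ m * (ε + τ₁ * ‖x‖ ^ m))) ≤
      C * ε ^ ((10 * m + (d : ℝ) - 1) / (12 * m)) := by
  set n := d - 1 with hn
  have hn1 : 1 ≤ n := by omega
  have hnc : (n : ℝ) = (d : ℝ) - 1 := by
    rw [hn]; push_cast [Nat.cast_sub (by omega : 1 ≤ d)]; ring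
  have hd1 : (1 : ℝ) ≤ (d : ℝ) - 1 := by
    have : (2 : ℝ) ≤ (d : ℝ) := by exact_mod_cast hd
    linarith
  have hm0 : (0 : ℝ) < m := by linarith
  have h2mn : (n : ℝ) < 2 * m := by rw [hnc]; linarith
  have h2mn' : (0 : ℝ) < 2 * m - (n : ℝ) := by linarith
  haveI : Nontrivial (EuclideanSpace ℝ (Fin n)) :=
    Module.nontrivial_of_finrank_pos (R := ℝ)
      (by rw [finrank_euclideanSpace_fin]; omega)
  set V := (volume (Metric.ball (0 : EuclideanSpace ℝ (Fin n)) 1)).toReal with hV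
  have hV0 : 0 < V :=
    ENNReal.toReal_pos (Metric.measure_ball_pos _ _ one_pos).ne' measure_ball_lt_top.ne
  refine ⟨(n : ℝ) * V / (τ₁ ^ 2 * (2 * m - (n : ℝ))), min 1 (R ^ (12 * m)),
    by positivity, lt_min one_pos (rpow_pos_of_pos hR _), ?_⟩
  intro ε hε hεlt
  have hε1 : ε < 1 := lt_of_lt_of_le hεlt (min_le_left _ _)
  set a := ε ^ (1 / (12 * m)) with ha
  have ha0 : 0 < a := rpow_pos_of_pos hε _
  have haR : a < R := by
    have h1 : ε < R ^ (12 * m) := lt_of_lt_of_le hεlt (min_le_right _ _)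
    have h2 : a < (R ^ (12 * m)) ^ (1 / (12 * m)) :=
      Real.rpow_lt_rpow hε.le h1 (by positivity)
    rwa [← Real.rpow_mul hR.le, mul_one_div, div_self (by positivity : (12 : ℝ) * m ≠ 0),
      Real.rpow_one] at h2
  set s := {x : EuclideanSpace ℝ (Fin n) | a < ‖x‖ ∧ ‖x‖ < R} with hsdef
  have hs_meas : MeasurableSet s :=
    show MeasurableSet ((fun x : EuclideanSpace ℝ (Fin n) => ‖x‖) ⁻¹' Ioo a R) from
      measurable_norm measurableSet_Ioo
  set g : EuclideanSpace ℝ (Fin n) → ℝ := fun x => ε / (τ₁ * ‖x‖ ^ m) ^ 2 with hg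
  -- integrability of g on s
  have hg_meas : Measurable g := by
    have hc : Continuous fun x : EuclideanSpace ℝ (Fin n) => ‖x‖ ^ m :=
      continuous_norm.rpow_const fun x => Or.inr hm0.le
    exact measurable_const.div (((hc.measurable).const_mul τ₁).pow_const 2)
  have hsub : s ⊆ Metric.ball (0 : EuclideanSpace ℝ (Fin n)) R := fun x hx => by
    simpa [mem_ball_zero_iff] using hx.2
  have hμs : volume s ≠ ⊤ := ((measure_mono hsub).trans_lt measure_ball_lt_top).ne
  have hg_int : IntegrableOn g s volume := by
    apply Measure.integrableOn_of_bounded (M := ε / (τ₁ * a ^ m) ^ 2) hμs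
      hg_meas.aestronglyMeasurable
    filter_upwards [ae_restrict_mem hs_meas] with x hx
    have hx0 : 0 < ‖x‖ := ha0.trans hx.1
    have hm' : a ^ m ≤ ‖x‖ ^ m := Real.rpow_le_rpow ha0.le hx.1.le hm0.le
    rw [Real.norm_eq_abs, abs_of_nonneg (by positivity)]
    apply div_le_div_of_nonneg_left hε.le (by positivity)
    have hma : 0 ≤ a ^ m := Real.rpow_nonneg ha0.le m
    gcongr
  -- pointwise bound
  have step1 : (∫ x in s, ε / (τ₁ * ‖x‖ ^ m * (ε + τ₁ * ‖x‖ ^ m))) ≤ ∫ x in s, g x := by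
    apply integral_mono_of_nonneg
    · filter_upwards with x
      have : (0:ℝ) ≤ ‖x‖ ^ m := Real.rpow_nonneg (norm_nonneg x) m
      positivity
    · exact hg_int
    · filter_upwards [ae_restrict_mem hs_meas] with x hx
      have hx0 : 0 < ‖x‖ := ha0.trans hx.1
      have hA : 0 < τ₁ * ‖x‖ ^ m := by
        have := Real.rpow_pos_of_pos hx0 m; positivity
      have : (τ₁ * ‖x‖ ^ m) ^ 2 ≤ τ₁ * ‖x‖ ^ m * (ε + τ₁ * ‖x‖ ^ m) := by nlinarith
      simpa [hg, sq] using div_le_div_of_nonneg_left hε.le (by positivity) this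
  -- radial representation
  set F : ℝ → ℝ := (Ioo a R).indicator fun y => ε / (τ₁ * y ^ m) ^ 2 with hF
  have step2 : (∫ x in s, g x) = ∫ x : EuclideanSpace ℝ (Fin n), F ‖x‖ := by
    rw [← integral_indicator hs_meas]
    refine integral_congr_ae (Filter.Eventually.of_forall fun x => ?_)
    by_cases h : x ∈ s
    · have h' : ‖x‖ ∈ Ioo a R := ⟨h.1, h.2⟩
      simp [hF, indicator_of_mem, h, h', hg]
    · have h' : ‖x‖ ∉ Ioo a R := fun hc => h ⟨hc.1, hc.2⟩
      simp [hF, indicator_of_notMem, h, h']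
  set q : ℝ := (n : ℝ) - 1 - 2 * m with hq
  have hq1 : q + 1 = (n : ℝ) - 2 * m := by rw [hq]; ring
  have step3 : (∫ y in Ioi (0:ℝ), y ^ (n - 1) * F y)
      = (ε / τ₁ ^ 2) * ∫ y in Ioo a R, y ^ q := by
    have h1 : ∀ y : ℝ, y ^ (n - 1) * F y
        = (Ioo a R).indicator (fun y => y ^ (n - 1) * (ε / (τ₁ * y ^ m) ^ 2)) y := by
      intro y
      by_cases h : y ∈ Ioo a R <;> simp [hF, indicator_of_mem, indicator_of_notMem, h]
    simp_rw [h1]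
    have hsub2 : Ioo a R ⊆ Ioi (0:ℝ) := fun y hy => lt_trans ha0 hy.1
    rw [setIntegral_indicator measurableSet_Ioo,
      inter_eq_self_of_subset_right hsub2, ← integral_const_mul]
    refine setIntegral_congr_fun measurableSet_Ioo fun y hy => ?_
    have hy0 : 0 < y := ha0.trans hy.1
    have e1 : (τ₁ * y ^ m) ^ 2 = τ₁ ^ 2 * y ^ (2 * m) := by
      rw [mul_pow, ← Real.rpow_natCast (y ^ m) 2, ← Real.rpow_mul hy0.le]
      norm_num [mul_comm]
    have e2 : (y : ℝ) ^ (n - 1) = y ^ ((n : ℝ) - 1) := by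
      rw [← Real.rpow_natCast y (n - 1)]
      congr 1
      push_cast [Nat.cast_sub hn1]
      ring
    have e3 : y ^ q = y ^ ((n : ℝ) - 1) / y ^ (2 * m) := by
      rw [hq, Real.rpow_sub hy0]
    rw [e1, e2, e3, div_mul_div_comm, mul_div_assoc', mul_comm (y ^ ((n : ℝ) - 1)) ε]
  have hIoo : (∫ y in Ioo a R, y ^ q) = (R ^ (q + 1) - a ^ (q + 1)) / (q + 1) := by
    rw [← integral_Ioc_eq_integral_Ioo, ← intervalIntegral.integral_of_le haR.le]
    exact integral_rpow (Or.inr ⟨ne_of_lt (by rw [hq]; linarith : q < -1),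
      notMem_uIcc_of_lt ha0 hR⟩)
  have hbound : (∫ y in Ioo a R, y ^ q) ≤ a ^ (q + 1) / (2 * m - (n : ℝ)) := by
    rw [hIoo]
    have hqne : q + 1 ≠ 0 := by rw [hq1]; linarith
    have heq : (R ^ (q + 1) - a ^ (q + 1)) / (q + 1)
        = (a ^ (q + 1) - R ^ (q + 1)) / (2 * m - (n : ℝ)) := by
      rw [div_eq_div_iff hqne h2mn'.ne', hq1]
      ring
    rw [heq]
    exact (div_le_div_iff_of_pos_right h2mn').mpr
      (sub_le_self _ (Real.rpow_pos_of_pos hR _).le)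
  have hpolar := integral_fun_norm_addHaar (volume : Measure (EuclideanSpace ℝ (Fin n))) F
  rw [finrank_euclideanSpace_fin] at hpolar
  have hexp : ε * a ^ (q + 1) = ε ^ ((10 * m + (d : ℝ) - 1) / (12 * m)) := by
    have h1 : a ^ (q + 1) = ε ^ (1 / (12 * m) * (q + 1)) := by
      rw [ha, ← Real.rpow_mul hε.le]
    have h2 : ε * ε ^ (1 / (12 * m) * (q + 1)) = ε ^ (1 + 1 / (12 * m) * (q + 1)) := by
      rw [Real.rpow_add hε, Real.rpow_one]
    rw [h1, h2]
    congr 1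
    rw [hq1, hnc]
    field_simp
    ring
  calc (∫ x in s, ε / (τ₁ * ‖x‖ ^ m * (ε + τ₁ * ‖x‖ ^ m)))
      ≤ ∫ x in s, g x := step1
    _ = ∫ x : EuclideanSpace ℝ (Fin n), F ‖x‖ := step2
    _ = (n : ℝ) * V * ((ε / τ₁ ^ 2) * ∫ y in Ioo a R, y ^ q) := by
        rw [hpolar]
        simp only [nsmul_eq_mul, smul_eq_mul]
        rw [step3, hV, ← measureReal_def]
        ring
    _ ≤ (n : ℝ) * V * ((ε / τ₁ ^ 2) * (a ^ (q + 1) / (2 * m - (n : ℝ)))) := by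
        have h1 : (0 : ℝ) ≤ (n : ℝ) * V := by positivity
        have h2 : (0 : ℝ) ≤ ε / τ₁ ^ 2 := by positivity
        exact mul_le_mul_of_nonneg_left (mul_le_mul_of_nonneg_left hbound h2) h1
    _ = (n : ℝ) * V / (τ₁ ^ 2 * (2 * m - (n : ℝ))) * (ε * a ^ (q + 1)) := by
        field_simp
    _ = (n : ℝ) * V / (τ₁ ^ 2 * (2 * m - (n : ℝ)))
        * ε ^ ((10 * m + (d : ℝ) - 1) / (12 * m)) := by rw [hexp]
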